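/- Let G be a maximal 3-γc-vertex critical graph with δ(G) ≥ 4 and α(G) = δ(G) + 1. Then no vertex of degree δ(G) belongs to any maximum independent set of G. -/
import Mathlib


open Finset

variable {V : Type*}

/-- `D` is a connected dominating set of `G`: every vertex is in `D` or adjacent to a
vertex of `D`, and the subgraph induced by `D` is connected. -/
def IsConnDomSet (G : SimpleGraph V) (D : Set V) : Prop :=
  (∀ v : V, v ∈ D ∨ ∃ u ∈ D, G.Adj u v) ∧ (G.induce D).Connected

/-- The connected domination number `γc(G)`. -/
noncomputable def gammaC (G : SimpleGraph V) [Fintype V] : ℕ :=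
  sInf {k | ∃ D : Finset V, D.card = k ∧ IsConnDomSet G ↑D}

/-- The independence number `α(G)`. -/
noncomputable def alpha (G : SimpleGraph V) [Fintype V] : ℕ :=
  sSup {k | ∃ I : Finset V, I.card = k ∧ (↑I : Set V).Pairwise fun u v => ¬ G.Adj u v}

/-- The clique number `ω(G)`. -/
noncomputable def omegaNum (G : SimpleGraph V) [Fintype V] : ℕ :=
  sSup {k | ∃ W : Finset V, W.card = k ∧ (↑W : Set V).Pairwise G.Adj}

/-- The minimum degree `δ(G)`. -/
noncomputable def minDeg (G : SimpleGraph V) [Fintype V] : ℕ :=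
  sInf {k | ∃ v : V, (G.neighborSet v).ncard = k}

/-- The vertex connectivity `κ(G)`: the minimum size of a set of vertices whose
deletion leaves a graph that is disconnected or has at most one vertex
(so `κ = n - 1` for the complete graph on `n` vertices). -/
noncomputable def kappa (G : SimpleGraph V) [Fintype V] : ℕ :=
  sInf {k | ∃ S : Finset V, S.card = k ∧
    (¬ (G.induce (↑S : Set V)ᶜ).Connected ∨ ((↑S : Set V)ᶜ).Subsingleton)}

/-- `G` is `3`-`γc`-edge critical: `γc(G) = 3` and adding any missing edge decreases `γc`. -/
def EdgeCritical3 (G : SimpleGraph V) [Fintype V] : Prop :=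
  gammaC G = 3 ∧ ∀ u v : V, u ≠ v → ¬ G.Adj u v →
    gammaC (G ⊔ SimpleGraph.fromEdgeSet {s(u, v)}) < 3

/-- `G` is `3`-`γc`-vertex critical: `G` is `2`-connected, `γc(G) = 3` and deleting any
vertex decreases `γc`. -/
def VertexCritical3 (G : SimpleGraph V) [Fintype V] [DecidableEq V] : Prop :=
  2 ≤ kappa G ∧ gammaC G = 3 ∧ ∀ v : V, gammaC (G.induce {w | w ≠ v}) < 3

/-- `G` is maximal `3`-`γc`-vertex critical. -/
def MaximalVertexCritical3 (G : SimpleGraph V) [Fintype V] [DecidableEq V] : Prop :=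
  EdgeCritical3 G ∧ VertexCritical3 G

lemma aux_sing (G : SimpleGraph V) (a : V) : (G.induce {a}).Connected := by
  rw [SimpleGraph.connected_iff]
  refine ⟨?_, ⟨⟨a, Set.mem_singleton a⟩⟩⟩
  intro u v
  have hu : (u : V) = a := u.2
  have hv : (v : V) = a := v.2
  have : u = v := Subtype.ext (hu.trans hv.symm)
  rw [this]

lemma aux_pair (G : SimpleGraph V) {a b : V} (hab : G.Adj a b) :
    (G.induce {a, b}).Connected := by
  rw [SimpleGraph.connected_iff]
  have ha : a ∈ ({a, b} : Set V) := Set.mem_insert a {b}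
  refine ⟨?_, ⟨⟨a, ha⟩⟩⟩
  have key : ∀ u : ({a, b} : Set V), (G.induce {a, b}).Reachable u ⟨a, ha⟩ := by
    intro u
    rcases u.2 with h | h
    · have : u = ⟨a, ha⟩ := Subtype.ext h
      rw [this]
    · have hadj : (G.induce {a, b}).Adj u ⟨a, ha⟩ := by
        show G.Adj (u : V) a
        rw [show (u : V) = b from h]
        exact hab.symm
      exact hadj.reachable
  intro u v
  exact (key u).trans (key v).symm

lemma aux_adj_of_pair (G : SimpleGraph V) {a b : V} (hne : a ≠ b)
    (h : (G.induce {a, b}).Connected) : G.Adj a b := by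
  have ha : a ∈ ({a, b} : Set V) := Set.mem_insert a {b}
  have hb : b ∈ ({a, b} : Set V) := Set.mem_insert_iff.mpr (Or.inr rfl)
  obtain ⟨w⟩ := h.preconnected ⟨a, ha⟩ ⟨b, hb⟩
  suffices H : ∀ (u v : ({a, b} : Set V)) (_ : (G.induce {a, b}).Walk u v),
      (u : V) = a → (v : V) = b → G.Adj a b from H _ _ w rfl rfl
  intro u v w
  induction w with
  | nil => intro h1 h2; exact absurd (h1.symm.trans h2) hne
  | @cons p q r hpq w ih =>
    intro h1 h2
    rcases q.2 with hq | hq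
    · have : q = p := Subtype.ext (by rw [hq, h1])
      rw [this] at hpq
      exact absurd hpq (SimpleGraph.irrefl _)
    · have : G.Adj (p : V) (q : V) := hpq
      rw [h1, hq] at this
      exact this

lemma univ_cds (G : SimpleGraph V) [Fintype V] (h : G.Connected) :
    IsConnDomSet G ↑(Finset.univ : Finset V) := by
  constructor
  · intro v; left; simp
  · have hs : ((Finset.univ : Finset V) : Set V) = Set.univ := by simp
    rw [hs]
    exact ((SimpleGraph.induceUnivIso G).connected_iff).mpr h

lemma no_small_cds (G : SimpleGraph V) [Fintype V] (h3 : gammaC G = 3) (D : Finset V)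
    (hD : IsConnDomSet G ↑D) : 3 ≤ D.card := by
  have h1 : gammaC G ≤ D.card := Nat.sInf_le ⟨D, rfl, hD⟩
  omega

lemma exists_small_cds (G : SimpleGraph V) [Fintype V] (hconn : G.Connected)
    (h3 : gammaC G < 3) : ∃ D : Finset V, D.card ≤ 2 ∧ IsConnDomSet G ↑D := by
  have hne : {k | ∃ D : Finset V, D.card = k ∧ IsConnDomSet G ↑D}.Nonempty :=
    ⟨_, Finset.univ, rfl, univ_cds G hconn⟩
  obtain ⟨D, hcard, hcds⟩ := Nat.sInf_mem hne
  unfold gammaC at h3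
  exact ⟨D, by omega, hcds⟩

lemma conn_of_kappa (G : SimpleGraph V) [Fintype V] (h : 2 ≤ kappa G) : G.Connected := by
  by_contra hc
  have h0 : (0 : ℕ) ∈ {k | ∃ S : Finset V, S.card = k ∧
      (¬ (G.induce (↑S : Set V)ᶜ).Connected ∨ ((↑S : Set V)ᶜ).Subsingleton)} := by
    refine ⟨∅, Finset.card_empty, Or.inl ?_⟩
    rw [show ((↑(∅ : Finset V) : Set V)ᶜ) = Set.univ by simp]
    intro hcon
    exact hc (((SimpleGraph.induceUnivIso G).connected_iff).mp hcon)
  have := Nat.sInf_le h0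
  unfold kappa at h
  omega

lemma conn_del_of_kappa (G : SimpleGraph V) [Fintype V] [DecidableEq V] (h : 2 ≤ kappa G)
    (v : V) : (G.induce {w | w ≠ v}).Connected := by
  by_contra hc
  have hset : ((↑({v} : Finset V) : Set V)ᶜ) = {w | w ≠ v} := by
    ext w; simp
  have h1 : (1 : ℕ) ∈ {k | ∃ S : Finset V, S.card = k ∧
      (¬ (G.induce (↑S : Set V)ᶜ).Connected ∨ ((↑S : Set V)ᶜ).Subsingleton)} := by
    refine ⟨{v}, Finset.card_singleton v, Or.inl ?_⟩
    rw [hset]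
    exact hc
  have := Nat.sInf_le h1
  unfold kappa at h
  omega

lemma L1 (G : SimpleGraph V) [Fintype V] [DecidableEq V]
    (h3 : gammaC G = 3) (hconn : G.Connected) {u v : V}
    (hne : u ≠ v) (hnadj : ¬ G.Adj u v)
    (hlt : gammaC (G ⊔ SimpleGraph.fromEdgeSet {s(u, v)}) < 3)
    (hdegv : ∃ w, G.Adj v w ∧ w ≠ u) (hdegu : ∃ w, G.Adj u w ∧ w ≠ v) :
    (∀ t, t ≠ u → t ≠ v → G.Adj t u ∨ G.Adj t v) ∨
    (∃ w, G.Adj u w ∧ ¬ G.Adj w v ∧ ∀ t, t ≠ u → t ≠ w → t ≠ v → G.Adj t u ∨ G.Adj t w) ∨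
    (∃ w, G.Adj v w ∧ ¬ G.Adj w u ∧ ∀ t, t ≠ v → t ≠ w → t ≠ u → G.Adj t v ∨ G.Adj t w) := by
  set G' := G ⊔ SimpleGraph.fromEdgeSet {s(u, v)} with hG'def
  have hG'conn : G'.Connected := hconn.mono le_sup_left
  obtain ⟨D, hDcard, hDdom, hDconn⟩ := exists_small_cds G' hG'conn hlt
  have hadj' : ∀ a b : V, G'.Adj a b ↔ G.Adj a b ∨ (a = u ∧ b = v) ∨ (a = v ∧ b = u) := by
    intro a b
    rw [hG'def]
    simp only [SimpleGraph.sup_adj, SimpleGraph.fromEdgeSet_adj, Set.mem_singleton_iff,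
      Sym2.eq_iff]
    constructor
    · rintro (h | ⟨(⟨rfl, rfl⟩ | ⟨rfl, rfl⟩), hne'⟩)
      · exact Or.inl h
      · exact Or.inr (Or.inl ⟨rfl, rfl⟩)
      · exact Or.inr (Or.inr ⟨rfl, rfl⟩)
    · rintro (h | ⟨rfl, rfl⟩ | ⟨rfl, rfl⟩)
      · exact Or.inl h
      · exact Or.inr ⟨Or.inl ⟨rfl, rfl⟩, hne⟩
      · exact Or.inr ⟨Or.inr ⟨rfl, rfl⟩, hne.symm⟩
  have hDne : D.Nonempty := by
    obtain ⟨⟨w, hw⟩⟩ := hDconn.nonempty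
    exact ⟨w, Finset.mem_coe.mp hw⟩
  have hc12 : D.card = 1 ∨ D.card = 2 := by
    have := Finset.card_pos.mpr hDne; omega
  rcases hc12 with hc1 | hc2
  · -- singleton case
    obtain ⟨s, rfl⟩ := Finset.card_eq_one.mp hc1
    have hdom_s : ∀ t, t ≠ s → G'.Adj s t := by
      intro t ht
      rcases hDdom t with h | ⟨q, hq, h⟩
      · exact absurd (Finset.mem_singleton.mp (Finset.mem_coe.mp h)) ht
      · rw [Finset.mem_coe, Finset.mem_singleton] at hq
        rw [hq] at h; exact h
    by_cases hsu : s = u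
    · subst hsu
      obtain ⟨w, hwv, hwu⟩ := hdegv
      have hw_ne_v : w ≠ v := fun hh => (by rw [hh] at hwv; exact G.irrefl hwv)
      have hsw : G.Adj s w := by
        have h1 := hdom_s w hwu
        rw [hadj'] at h1
        rcases h1 with h1 | ⟨_, h1⟩ | ⟨h1, _⟩
        · exact h1
        · exact absurd h1 hw_ne_v
        · exact absurd h1 hne
      exfalso
      have hcds : IsConnDomSet G ↑({s, w} : Finset V) := by
        constructor
        · intro t
          by_cases h1 : t = s; · left; simp [h1]
          by_cases h2 : t = w; · left; simp [h2]
          by_cases h3' : t = v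
          · right; exact ⟨w, by simp, by rw [h3']; exact hwv.symm⟩
          · right; refine ⟨s, by simp, ?_⟩
            have h4 := hdom_s t h1
            rw [hadj'] at h4
            rcases h4 with h4 | ⟨_, h4⟩ | ⟨h4, _⟩
            · exact h4
            · exact absurd h4 h3'
            · exact absurd h4 hne
        · rw [show ((({s, w} : Finset V)) : Set V) = {s, w} by simp]
          exact aux_pair G hsw
      have hle := no_small_cds G h3 _ hcds
      have : ({s, w} : Finset V).card ≤ 2 := Finset.card_insert_le s {w}
      omega
    · by_cases hsv : s = v
      · subst hsv
        obtain ⟨w, hwu, hwv⟩ := hdegu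
        have hw_ne_u : w ≠ u := fun hh => (by rw [hh] at hwu; exact G.irrefl hwu)
        have hsw : G.Adj s w := by
          have h1 := hdom_s w hwv
          rw [hadj'] at h1
          rcases h1 with h1 | ⟨h1, _⟩ | ⟨_, h1⟩
          · exact h1
          · exact absurd h1.symm hne
          · exact absurd h1 hw_ne_u
        exfalso
        have hcds : IsConnDomSet G ↑({s, w} : Finset V) := by
          constructor
          · intro t
            by_cases h1 : t = s; · left; simp [h1]
            by_cases h2 : t = w; · left; simp [h2]
            by_cases h3' : t = u
            · right; exact ⟨w, by simp, by rw [h3']; exact hwu.symm⟩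
            · right; refine ⟨s, by simp, ?_⟩
              have h4 := hdom_s t h1
              rw [hadj'] at h4
              rcases h4 with h4 | ⟨h4, _⟩ | ⟨_, h4⟩
              · exact h4
              · exact absurd h4.symm hne
              · exact absurd h4 h3'
          · rw [show ((({s, w} : Finset V)) : Set V) = {s, w} by simp]
            exact aux_pair G hsw
        have hle := no_small_cds G h3 _ hcds
        have : ({s, w} : Finset V).card ≤ 2 := Finset.card_insert_le s {w}
        omega
      · -- s not u, v : {s} is a CDS of G, contradiction
        exfalso
        have hcds : IsConnDomSet G ↑({s} : Finset V) := by
          constructor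
          · intro t
            by_cases ht : t = s; · left; simp [ht]
            right; refine ⟨s, by simp, ?_⟩
            have h4 := hdom_s t ht
            rw [hadj'] at h4
            rcases h4 with h4 | ⟨h4, _⟩ | ⟨h4, _⟩
            · exact h4
            · exact absurd h4 hsu
            · exact absurd h4 hsv
          · rw [show ((({s} : Finset V)) : Set V) = {s} by simp]
            exact aux_sing G s
        have hle := no_small_cds G h3 _ hcds
        simp at hle
  · -- two-element case
    obtain ⟨s, t, hst_ne, rfl⟩ := Finset.card_eq_two.mp hc2
    have hadj_st : G'.Adj s t := by
      apply aux_adj_of_pair G' hst_ne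
      rw [show ((({s, t} : Finset V)) : Set V) = {s, t} by simp] at hDconn
      exact hDconn
    have hdom2 : ∀ r, r ≠ s → r ≠ t → G'.Adj s r ∨ G'.Adj t r := by
      intro r h1 h2
      rcases hDdom r with h | ⟨q, hq, h⟩
      · rw [Finset.mem_coe, Finset.mem_insert, Finset.mem_singleton] at h
        tauto
      · rw [Finset.mem_coe, Finset.mem_insert, Finset.mem_singleton] at hq
        rcases hq with rfl | rfl
        · exact Or.inl h
        · exact Or.inr h
    -- helper to build a CDS contradiction from a dominating adjacent pair
    have mkcds : ∀ a b : V, G.Adj a b →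
        (∀ r, r ≠ a → r ≠ b → G.Adj a r ∨ G.Adj b r) → False := by
      intro a b hab hdom
      have hcds : IsConnDomSet G ↑({a, b} : Finset V) := by
        constructor
        · intro r
          by_cases h1 : r = a; · left; simp [h1]
          by_cases h2 : r = b; · left; simp [h2]
          rcases hdom r h1 h2 with h | h
          · exact Or.inr ⟨a, by simp, h⟩
          · exact Or.inr ⟨b, by simp, h⟩
        · rw [show ((({a, b} : Finset V)) : Set V) = {a, b} by simp]
          exact aux_pair G hab
      have hle := no_small_cds G h3 _ hcds
      have hab' : a ≠ b := G.ne_of_adj hab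
      have : ({a, b} : Finset V).card ≤ 2 := Finset.card_insert_le a {b}
      omega
    by_cases hsu : s = u
    · have hsu' : u = s := hsu.symm; subst hsu'
      by_cases htv : t = v
      · have htv' : v = t := htv.symm; subst htv'
        -- case (a)
        left
        intro r hru hrv
        rcases hdom2 r hru hrv with h | h
        · rw [hadj'] at h
          rcases h with h | ⟨_, h⟩ | ⟨h, _⟩
          · exact Or.inl h.symm
          · exact absurd h hrv
          · exact absurd h hne
        · rw [hadj'] at h
          rcases h with h | ⟨h, _⟩ | ⟨_, h⟩
          · exact Or.inr h.symm
          · exact absurd h.symm hne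
          · exact absurd h hru
      · -- s = u, t ∉ {u, v} (t ≠ u since s ≠ t)
        have htu : t ≠ u := fun hh => hst_ne (by rw [hh])
        have hut : G.Adj u t := by
          have h1 := hadj_st
          rw [hadj'] at h1
          rcases h1 with h1 | ⟨_, h1⟩ | ⟨h1, _⟩
          · exact h1
          · exact absurd h1 htv
          · exact absurd h1 hne
        have tr : ∀ r, r ≠ u → r ≠ t → r ≠ v → G.Adj u r ∨ G.Adj t r := by
          intro r h1 h2 h3'
          rcases hdom2 r h1 h2 with h | h
          · rw [hadj'] at h
            rcases h with h | ⟨_, h⟩ | ⟨h, _⟩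
            · exact Or.inl h
            · exact absurd h h3'
            · exact absurd h hne
          · rw [hadj'] at h
            rcases h with h | ⟨h, _⟩ | ⟨h, _⟩
            · exact Or.inr h
            · exact absurd h htu
            · exact absurd h htv
        have hntv : ¬ G.Adj t v := by
          intro hc
          apply mkcds u t hut
          intro r h1 h2
          by_cases h3' : r = v
          · right; rw [h3']; exact hc
          · exact tr r h1 h2 h3'
        right; left
        exact ⟨t, hut, hntv, fun r h1 h2 h3' => by
          rcases tr r h1 h2 h3' with h | h
          · exact Or.inl h.symm
          · exact Or.inr h.symm⟩
    · by_cases htu : t = u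
      · have htu' : u = t := htu.symm; subst htu'
        by_cases hsv : s = v
        · have hsv' : v = s := hsv.symm; subst hsv'
          -- D = {v, u} : case (a)
          left
          intro r hru hrv
          rcases hdom2 r (fun hh => hrv hh) (fun hh => hru hh) with h | h
          · rw [hadj'] at h
            rcases h with h | ⟨h, _⟩ | ⟨_, h⟩
            · exact Or.inr h.symm
            · exact absurd h.symm hne
            · exact absurd h hru
          · rw [hadj'] at h
            rcases h with h | ⟨_, h⟩ | ⟨h, _⟩
            · exact Or.inl h.symm
            · exact absurd h hrv
            · exact absurd h hne
        · -- t = u, s ∉ {u, v}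
          have hsu' : s ≠ u := hsu
          have hut : G.Adj u s := by
            have h1 := hadj_st
            rw [hadj'] at h1
            rcases h1 with h1 | ⟨h1, _⟩ | ⟨h1, _⟩
            · exact h1.symm
            · exact absurd h1 hsu'
            · exact absurd h1 hsv
          have tr : ∀ r, r ≠ u → r ≠ s → r ≠ v → G.Adj u r ∨ G.Adj s r := by
            intro r h1 h2 h3'
            rcases hdom2 r h2 h1 with h | h
            · rw [hadj'] at h
              rcases h with h | ⟨h, _⟩ | ⟨h, _⟩
              · exact Or.inr h
              · exact absurd h hsu'
              · exact absurd h hsv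
            · rw [hadj'] at h
              rcases h with h | ⟨_, h⟩ | ⟨h, _⟩
              · exact Or.inl h
              · exact absurd h h3'
              · exact absurd h hne
          have hnsv : ¬ G.Adj s v := by
            intro hc
            apply mkcds u s hut
            intro r h1 h2
            by_cases h3' : r = v
            · right; rw [h3']; exact hc
            · exact tr r h1 h2 h3'
          right; left
          exact ⟨s, hut, hnsv, fun r h1 h2 h3' => by
            rcases tr r h1 h2 h3' with h | h
            · exact Or.inl h.symm
            · exact Or.inr h.symm⟩
      · -- neither s nor t is u
        by_cases hsv : s = v
        · have hsv' : v = s := hsv.symm; subst hsv'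
          -- s = v, t ∉ {u, v}
          have htv : t ≠ v := fun hh => hst_ne (by rw [hh])
          have hvt : G.Adj v t := by
            have h1 := hadj_st
            rw [hadj'] at h1
            rcases h1 with h1 | ⟨h1, _⟩ | ⟨_, h1⟩
            · exact h1
            · exact absurd h1.symm hne
            · exact absurd h1 htu
          have tr : ∀ r, r ≠ v → r ≠ t → r ≠ u → G.Adj v r ∨ G.Adj t r := by
            intro r h1 h2 h3'
            rcases hdom2 r h1 h2 with h | h
            · rw [hadj'] at h
              rcases h with h | ⟨h, _⟩ | ⟨_, h⟩
              · exact Or.inl h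
              · exact absurd h.symm hne
              · exact absurd h h3'
            · rw [hadj'] at h
              rcases h with h | ⟨h, _⟩ | ⟨h, _⟩
              · exact Or.inr h
              · exact absurd h htu
              · exact absurd h htv
          have hntu : ¬ G.Adj t u := by
            intro hc
            apply mkcds v t hvt
            intro r h1 h2
            by_cases h3' : r = u
            · right; rw [h3']; exact hc
            · exact tr r h1 h2 h3'
          right; right
          exact ⟨t, hvt, hntu, fun r h1 h2 h3' => by
            rcases tr r h1 h2 h3' with h | h
            · exact Or.inl h.symm
            · exact Or.inr h.symm⟩
        · by_cases htv : t = v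
          · have htv' : v = t := htv.symm; subst htv'
            -- t = v, s ∉ {u, v}
            have hvt : G.Adj v s := by
              have h1 := hadj_st
              rw [hadj'] at h1
              rcases h1 with h1 | ⟨h1, _⟩ | ⟨h1, _⟩
              · exact h1.symm
              · exact absurd h1 hsu
              · exact absurd h1 hsv
            have tr : ∀ r, r ≠ v → r ≠ s → r ≠ u → G.Adj v r ∨ G.Adj s r := by
              intro r h1 h2 h3'
              rcases hdom2 r h2 h1 with h | h
              · rw [hadj'] at h
                rcases h with h | ⟨h, _⟩ | ⟨h, _⟩
                · exact Or.inr h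
                · exact absurd h hsu
                · exact absurd h hsv
              · rw [hadj'] at h
                rcases h with h | ⟨h, _⟩ | ⟨_, h⟩
                · exact Or.inl h
                · exact absurd h.symm hne
                · exact absurd h h3'
            have hnsu : ¬ G.Adj s u := by
              intro hc
              apply mkcds v s hvt
              intro r h1 h2
              by_cases h3' : r = u
              · right; rw [h3']; exact hc
              · exact tr r h1 h2 h3'
            right; right
            exact ⟨s, hvt, hnsu, fun r h1 h2 h3' => by
              rcases tr r h1 h2 h3' with h | h
              · exact Or.inl h.symm
              · exact Or.inr h.symm⟩
          · -- {s, t} disjoint from {u, v} : CDS of G, contradiction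
            exfalso
            have hst : G.Adj s t := by
              have h1 := hadj_st
              rw [hadj'] at h1
              rcases h1 with h1 | ⟨h1, _⟩ | ⟨h1, _⟩
              · exact h1
              · exact absurd h1 hsu
              · exact absurd h1 hsv
            apply mkcds s t hst
            intro r h1 h2
            rcases hdom2 r h1 h2 with h | h
            · rw [hadj'] at h
              rcases h with h | ⟨h, _⟩ | ⟨h, _⟩
              · exact Or.inl h
              · exact absurd h hsu
              · exact absurd h hsv
            · rw [hadj'] at h
              rcases h with h | ⟨h, _⟩ | ⟨h, _⟩
              · exact Or.inr h
              · exact absurd h htu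
              · exact absurd h htv

lemma mkcds1 (G : SimpleGraph V) [Fintype V] [DecidableEq V] (h3 : gammaC G = 3) (a : V)
    (hdom : ∀ r, r ≠ a → G.Adj a r) : False := by
  have hcds : IsConnDomSet G ↑({a} : Finset V) := by
    constructor
    · intro r
      by_cases h1 : r = a
      · left; simp [h1]
      · exact Or.inr ⟨a, by simp, hdom r h1⟩
    · rw [show ((({a} : Finset V)) : Set V) = {a} by simp]
      exact aux_sing G a
  have hle := no_small_cds G h3 _ hcds
  simp at hle

lemma mkcds2 (G : SimpleGraph V) [Fintype V] [DecidableEq V] (h3 : gammaC G = 3) (a b : V)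
    (hab : G.Adj a b) (hdom : ∀ r, r ≠ a → r ≠ b → G.Adj a r ∨ G.Adj b r) : False := by
  have hcds : IsConnDomSet G ↑({a, b} : Finset V) := by
    constructor
    · intro r
      by_cases h1 : r = a
      · left; simp [h1]
      by_cases h2 : r = b
      · left; simp [h2]
      rcases hdom r h1 h2 with h | h
      · exact Or.inr ⟨a, by simp, h⟩
      · exact Or.inr ⟨b, by simp, h⟩
    · rw [show ((({a, b} : Finset V)) : Set V) = {a, b} by simp]
      exact aux_pair G hab
  have hle := no_small_cds G h3 _ hcds
  have : ({a, b} : Finset V).card ≤ 2 := Finset.card_insert_le a {b}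
  omega

lemma L2 (G : SimpleGraph V) [Fintype V] [DecidableEq V]
    (h3 : gammaC G = 3) (hκ : 2 ≤ kappa G) (v : V)
    (hlt : gammaC (G.induce {w | w ≠ v}) < 3)
    (hdeg : ∀ a : V, 2 ≤ (G.neighborSet a).ncard) :
    ∃ c d, c ≠ d ∧ G.Adj c d ∧ ¬ G.Adj c v ∧ ¬ G.Adj d v ∧ c ≠ v ∧ d ≠ v ∧
      ∀ t, t ≠ c → t ≠ d → t ≠ v → G.Adj t c ∨ G.Adj t d := by
  have hHconn : (G.induce {w | w ≠ v}).Connected := conn_del_of_kappa G hκ v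
  obtain ⟨D, hDcard, hDdom, hDconn⟩ := exists_small_cds _ hHconn hlt
  have hdomV : ∀ w : V, w ≠ v →
      (∃ q ∈ D, (q : V) = w) ∨ ∃ q ∈ D, G.Adj (q : V) w := by
    intro w hw
    rcases hDdom ⟨w, hw⟩ with h | ⟨q, hq, hadj⟩
    · exact Or.inl ⟨⟨w, hw⟩, Finset.mem_coe.mp h, rfl⟩
    · exact Or.inr ⟨q, Finset.mem_coe.mp hq, hadj⟩
  have hDne : D.Nonempty := by
    obtain ⟨⟨w, hw⟩⟩ := hDconn.nonempty
    exact ⟨w, Finset.mem_coe.mp hw⟩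
  have hc12 : D.card = 1 ∨ D.card = 2 := by
    have := Finset.card_pos.mpr hDne; omega
  rcases hc12 with hc1 | hc2
  · -- singleton case : contradiction
    exfalso
    obtain ⟨s, rfl⟩ := Finset.card_eq_one.mp hc1
    have hsv : (s : V) ≠ v := s.2
    have hdom1 : ∀ w, w ≠ v → w ≠ (s : V) → G.Adj (s : V) w := by
      intro w hw hws
      rcases hdomV w hw with ⟨q, hq, hqw⟩ | ⟨q, hq, hadj⟩
      · rw [Finset.mem_singleton] at hq
        rw [hq] at hqw
        exact absurd hqw.symm hws
      · rw [Finset.mem_singleton] at hq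
        rw [hq] at hadj
        exact hadj
    by_cases hadj_sv : G.Adj (s : V) v
    · apply mkcds1 G h3 (s : V)
      intro r hr
      by_cases hrv : r = v
      · rw [hrv]; exact hadj_sv
      · exact hdom1 r hrv hr
    · obtain ⟨w, hwnb, hwns⟩ := Set.exists_ne_of_one_lt_ncard (s := G.neighborSet v) (by have := hdeg v; omega) (s : V)
      have hvw : G.Adj v w := hwnb
      have hwv : w ≠ v := (G.ne_of_adj hvw).symm
      have hsw : G.Adj (s : V) w := hdom1 w hwv hwns
      apply mkcds2 G h3 (s : V) w hsw
      intro r hr1 hr2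
      by_cases hrv : r = v
      · right; rw [hrv]; exact hvw.symm
      · exact Or.inl (hdom1 r hrv hr1)
  · obtain ⟨s, t, hst, rfl⟩ := Finset.card_eq_two.mp hc2
    have hcd : (s : V) ≠ (t : V) := fun h => hst (Subtype.ext h)
    have hadj_cd : G.Adj (s : V) (t : V) := by
      have h1 : ((G.induce {w | w ≠ v}).induce {s, t}).Connected := by
        rw [show ((({s, t} : Finset {w | w ≠ v})) : Set {w | w ≠ v}) = {s, t} by simp] at hDconn
        exact hDconn
      have := aux_adj_of_pair (G.induce {w | w ≠ v}) (a := s) (b := t) hst h1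
      exact this
    have hdom2 : ∀ w, w ≠ v → w ≠ (s : V) → w ≠ (t : V) →
        G.Adj (s : V) w ∨ G.Adj (t : V) w := by
      intro w hw h1 h2
      rcases hdomV w hw with ⟨q, hq, hqw⟩ | ⟨q, hq, hadj⟩
      · rw [Finset.mem_insert, Finset.mem_singleton] at hq
        rcases hq with rfl | rfl
        · exact absurd hqw.symm h1
        · exact absurd hqw.symm h2
      · rw [Finset.mem_insert, Finset.mem_singleton] at hq
        rcases hq with rfl | rfl
        · exact Or.inl hadj
        · exact Or.inr hadj
    have hcv : ¬ G.Adj (s : V) v := by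
      intro hc
      apply mkcds2 G h3 (s : V) (t : V) hadj_cd
      intro r h1 h2
      by_cases hrv : r = v
      · left; rw [hrv]; exact hc
      · exact hdom2 r hrv h1 h2
    have hdv : ¬ G.Adj (t : V) v := by
      intro hc
      apply mkcds2 G h3 (s : V) (t : V) hadj_cd
      intro r h1 h2
      by_cases hrv : r = v
      · right; rw [hrv]; exact hc
      · exact hdom2 r hrv h1 h2
    refine ⟨(s : V), (t : V), hcd, hadj_cd, hcv, hdv, s.2, t.2, ?_⟩
    intro r h1 h2 h3'
    rcases hdom2 r h3' h1 h2 with h | h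
    · exact Or.inl h.symm
    · exact Or.inr h.symm


/-- in a maximal `3`-`γc`-vertex critical graph with `δ ≥ 4` and
`α = δ + 1`, no vertex of degree `δ` belongs to any maximum independent set. -/
theorem stmt_2 (G : SimpleGraph V) [Fintype V] [DecidableEq V]
    (h : MaximalVertexCritical3 G)
    (hδ : 4 ≤ minDeg G) (hα : alpha G = minDeg G + 1)
    (x : V) (hx : (G.neighborSet x).ncard = minDeg G)
    (I : Finset V) (hIind : (↑I : Set V).Pairwise fun u v => ¬ G.Adj u v)
    (hIcard : I.card = alpha G) :
    x ∉ I := by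
  intro hxI
  classical
  obtain ⟨⟨hγ3, hedge⟩, hκ2, -, hvert⟩ := h
  have hconn : G.Connected := conn_of_kappa G hκ2
  have hdegAll : ∀ w : V, 4 ≤ (G.neighborSet w).ncard := by
    intro w
    have h1 : minDeg G ≤ (G.neighborSet w).ncard := Nat.sInf_le ⟨w, rfl⟩
    omega
  have hnbr : ∀ a b : V, ∃ w, G.Adj a w ∧ w ≠ b := by
    intro a b
    obtain ⟨w, hw, hwb⟩ := Set.exists_ne_of_one_lt_ncard (s := G.neighborSet a)
      (by have := hdegAll a; omega) b
    exact ⟨w, hw, hwb⟩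
  have hL1 := fun (a b : V) (h1 : a ≠ b) (h2 : ¬ G.Adj a b) =>
    L1 G hγ3 hconn h1 h2 (hedge a b h1 h2) (hnbr b a) (hnbr a b)
  have hL2 := fun (w : V) =>
    L2 G hγ3 hκ2 w (hvert w) (fun a => by have := hdegAll a; omega)
  -- the neighborhood of x as a finset
  have hfinU : (G.neighborSet x).Finite := Set.toFinite _
  set U : Finset V := hfinU.toFinset with hUdef
  have hmemU : ∀ u, u ∈ U ↔ G.Adj x u := by
    intro u; rw [hUdef, Set.Finite.mem_toFinset]; exact Iff.rfl
  have hUcard : U.card = minDeg G := by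
    rw [hUdef, ← Set.ncard_eq_toFinset_card _ hfinU]; exact hx
  set I' : Finset V := I.erase x with hI'def
  have hI'card : I'.card = minDeg G := by
    rw [hI'def, Finset.card_erase_of_mem hxI, hIcard, hα]; omega
  have hind : ∀ a ∈ I, ∀ b ∈ I, a ≠ b → ¬ G.Adj a b := fun a ha b hb hne =>
    hIind (Finset.mem_coe.mpr ha) (Finset.mem_coe.mpr hb) hne
  have hI'I : ∀ y ∈ I', y ∈ I := fun y hy => (Finset.mem_erase.mp hy).2
  have hxI'adj : ∀ y ∈ I', ¬ G.Adj x y ∧ y ≠ x := by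
    intro y hy
    obtain ⟨hyx, hyI⟩ := Finset.mem_erase.mp hy
    exact ⟨hind x hxI y hyI (Ne.symm hyx), hyx⟩
  have hUI' : ∀ u ∈ U, u ∉ I' := by
    intro u hu hmem
    exact (hxI'adj u hmem).1 ((hmemU u).mp hu)
  have hxU : x ∉ U := by
    intro hh; exact G.irrefl ((hmemU x).mp hh)
  have hI'ind : ∀ y ∈ I', ∀ y' ∈ I', y ≠ y' → ¬ G.Adj y y' := fun y hy y' hy' hne =>
    hind y (hI'I y hy) y' (hI'I y' hy') hne
  -- the "private neighbour" predicate
  set Pm : V → V → Prop := fun w y => w ∈ U ∧ ¬ G.Adj w y ∧ ∀ z ∈ I', z ≠ y → G.Adj w z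
    with hPmdef
  -- T2 : every vertex of I' has a non-neighbour in U
  have T2 : ∀ y ∈ I', ∃ c ∈ U, ¬ G.Adj c y := by
    intro y hy
    obtain ⟨c, d, hcd, hadj, hcv, hdv, hcy, hdy, hdom⟩ := hL2 y
    by_cases hxc : x = c
    · exact ⟨d, (hmemU d).mpr (by rw [hxc]; exact hadj), hdv⟩
    by_cases hxd : x = d
    · exact ⟨c, (hmemU c).mpr (by rw [hxd]; exact hadj.symm), hcv⟩
    have hxy : x ≠ y := Ne.symm (hxI'adj y hy).2
    rcases hdom x hxc hxd hxy with hh | hh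
    · exact ⟨c, (hmemU c).mpr hh, hcv⟩
    · exact ⟨d, (hmemU d).mpr hh, hdv⟩
  -- T3 : every vertex of U has a non-neighbour in U
  have T3 : ∀ u ∈ U, ∃ c ∈ U, c ≠ u ∧ ¬ G.Adj c u := by
    intro u hu
    obtain ⟨c, d, hcd, hadj, hcv, hdv, hcu, hdu, hdom⟩ := hL2 u
    have hxc : x ≠ c := by
      intro hh; rw [← hh] at hcv; exact hcv ((hmemU u).mp hu)
    have hxd : x ≠ d := by
      intro hh; rw [← hh] at hdv; exact hdv ((hmemU u).mp hu)
    have hxu : x ≠ u := by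
      intro hh; rw [hh] at hxU; exact hxU hu
    rcases hdom x hxc hxd hxu with hh | hh
    · exact ⟨c, (hmemU c).mpr hh, hcu, hcv⟩
    · exact ⟨d, (hmemU d).mpr hh, hdu, hdv⟩
  -- T1 : structure of an added edge inside I'
  have T1 : ∀ y ∈ I', ∀ y' ∈ I', y ≠ y' →
      ∃ a b w, ((a = y ∧ b = y') ∨ (a = y' ∧ b = y)) ∧ Pm w b ∧
        (∀ t, t ≠ a → t ≠ w → t ≠ b → G.Adj t a ∨ G.Adj t w) := by
    intro y hy y' hy' hne'
    have hnadj : ¬ G.Adj y y' := hI'ind y hy y' hy' hne'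
    have hxy : x ≠ y := Ne.symm (hxI'adj y hy).2
    have hxy' : x ≠ y' := Ne.symm (hxI'adj y' hy').2
    rcases hL1 y y' hne' hnadj with ha | ⟨w, h1, h2, h3⟩ | ⟨w, h1, h2, h3⟩
    · exfalso
      rcases ha x hxy hxy' with hh | hh
      · exact (hxI'adj y hy).1 hh
      · exact (hxI'adj y' hy').1 hh
    · -- a := y, b := y'
      have hwx : w ≠ x := by
        intro hh; rw [hh] at h1; exact (hxI'adj y hy).1 h1.symm
      have hxw : G.Adj x w := by
        rcases h3 x hxy (Ne.symm hwx) hxy' with hh | hh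
        · exact absurd hh (hxI'adj y hy).1
        · exact hh
      have hwU : w ∈ U := (hmemU w).mpr hxw
      refine ⟨y, y', w, Or.inl ⟨rfl, rfl⟩, ⟨hwU, h2, ?_⟩, h3⟩
      intro z hz hzy'
      by_cases hzy : z = y
      · rw [hzy]; exact h1.symm
      · have hzw : z ≠ w := by
          intro hh; rw [hh] at hz; exact hUI' w hwU hz
        rcases h3 z hzy hzw hzy' with hh | hh
        · exact absurd hh (hI'ind z hz y hy hzy)
        · exact hh.symm
    · -- a := y', b := y
      have hwx : w ≠ x := by
        intro hh; rw [hh] at h1; exact (hxI'adj y' hy').1 h1.symm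
      have hxw : G.Adj x w := by
        rcases h3 x hxy' (Ne.symm hwx) hxy with hh | hh
        · exact absurd hh (hxI'adj y' hy').1
        · exact hh
      have hwU : w ∈ U := (hmemU w).mpr hxw
      refine ⟨y', y, w, Or.inr ⟨rfl, rfl⟩, ⟨hwU, h2, ?_⟩, h3⟩
      intro z hz hzy
      by_cases hzy' : z = y'
      · rw [hzy']; exact h1.symm
      · have hzw : z ≠ w := by
          intro hh; rw [hh] at hz; exact hUI' w hwU hz
        rcases h3 z hzy' hzw hzy with hh | hh
        · exact absurd hh (hI'ind z hz y' hy' hzy')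
        · exact hh.symm
  -- the partial selection function
  set g : V → V := fun y => if hh : ∃ w, Pm w y then hh.choose else x with hgdef
  have hgP : ∀ y, (∃ w, Pm w y) → Pm (g y) y := by
    intro y hy
    simp only [hgdef, dif_pos hy]
    exact hy.choose_spec
  set S : Finset V := I'.filter (fun y => ∃ w, Pm w y) with hSdef
  set E : Finset V := I'.filter (fun y => ¬ ∃ w, Pm w y) with hEdef
  have hSI' : S ⊆ I' := Finset.filter_subset _ _
  have hSE : S.card + E.card = I'.card := by
    rw [hSdef, hEdef]
    exact Finset.card_filter_add_card_filter_not _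
  have hSmem : ∀ y, y ∈ S ↔ y ∈ I' ∧ ∃ w, Pm w y := by
    intro y; rw [hSdef, Finset.mem_filter]
  have hEmem : ∀ y, y ∈ E ↔ y ∈ I' ∧ ¬ ∃ w, Pm w y := by
    intro y; rw [hEdef, Finset.mem_filter]
  have hEone : ∀ y ∈ E, ∀ y' ∈ E, y = y' := by
    intro y hy y' hy'
    by_contra hne'
    obtain ⟨hyI', hyP⟩ := (hEmem y).mp hy
    obtain ⟨hy'I', hy'P⟩ := (hEmem y').mp hy'
    obtain ⟨a, b, w, hor, hwP, -⟩ := T1 y hyI' y' hy'I' hne'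
    rcases hor with ⟨-, rfl⟩ | ⟨-, rfl⟩
    · exact hy'P ⟨w, hwP⟩
    · exact hyP ⟨w, hwP⟩
  have hginj : ∀ y ∈ S, ∀ y' ∈ S, g y = g y' → y = y' := by
    intro y hy y' hy' heq
    by_contra hne'
    obtain ⟨hyI', hyP⟩ := (hSmem y).mp hy
    obtain ⟨hy'I', hy'P⟩ := (hSmem y').mp hy'
    have h1 := hgP y hyP
    have h2 := hgP y' hy'P
    have h3 := h2.2.2 y hyI' hne'
    rw [← heq] at h3
    exact h1.2.1 h3
  have himgsub : S.image g ⊆ U := by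
    intro u hu
    obtain ⟨y, hy, rfl⟩ := Finset.mem_image.mp hu
    exact (hgP y ((hSmem y).mp hy).2).1
  have himgcard : (S.image g).card = S.card :=
    Finset.card_image_of_injOn (fun a ha b hb hab =>
      hginj a (Finset.mem_coe.mp ha) b (Finset.mem_coe.mp hb) hab)
  -- the clique property on images, given uniqueness of private neighbours
  have hpair : (∀ y ∈ S, ∀ w, Pm w y → w = g y) →
      ∀ y ∈ S, ∀ y' ∈ S, y ≠ y' → G.Adj (g y) (g y') := by
    intro hPuniq y hy y' hy' hyy'
    have hyI' := hSI' hy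
    have hy'I' := hSI' hy'
    have hyP := ((hSmem y).mp hy).2
    have hy'P := ((hSmem y').mp hy').2
    have hgyU : (g y) ∈ U := (hgP y hyP).1
    have hgy'U : (g y') ∈ U := (hgP y' hy'P).1
    obtain ⟨a, b, w, hor, hwP, hdom⟩ := T1 y hyI' y' hy'I' hyy'
    rcases hor with ⟨ha, hb⟩ | ⟨ha, hb⟩
    · rw [hb] at hwP
      rw [ha] at hdom
      rw [hb] at hdom
      have hwg : w = g y' := hPuniq y' hy' w hwP
      have h1 : g y ≠ y := fun hh => hUI' (g y) hgyU (by rw [hh]; exact hyI')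
      have h3 : g y ≠ y' := fun hh => hUI' (g y) hgyU (by rw [hh]; exact hy'I')
      by_cases h2 : g y = w
      · exact absurd (hginj y hy y' hy' (h2.trans hwg)) hyy'
      · rcases hdom (g y) h1 h2 h3 with hh | hh
        · exact absurd hh (hgP y hyP).2.1
        · rw [hwg] at hh; exact hh
    · rw [hb] at hwP
      rw [ha] at hdom
      rw [hb] at hdom
      have hwg : w = g y := hPuniq y hy w hwP
      have h1 : g y' ≠ y' := fun hh => hUI' (g y') hgy'U (by rw [hh]; exact hy'I')
      have h3 : g y' ≠ y := fun hh => hUI' (g y') hgy'U (by rw [hh]; exact hyI')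
      by_cases h2 : g y' = w
      · exact absurd (hginj y' hy' y hy (h2.trans hwg)) (Ne.symm hyy')
      · rcases hdom (g y') h1 h2 h3 with hh | hh
        · exact absurd hh (hgP y' hy'P).2.1
        · rw [hwg] at hh; exact hh.symm
  -- final clique and contradiction
  have hUne : U.Nonempty := Finset.card_pos.mp (by rw [hUcard]; omega)
  have hfinal : (∀ u ∈ U, ∀ u' ∈ U, u ≠ u' → G.Adj u u') → False := by
    intro hclique
    obtain ⟨u, hu⟩ := hUne
    obtain ⟨c, hc, hcu, hcnadj⟩ := T3 u hu
    exact hcnadj (hclique c hc u hu hcu)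
  apply hfinal
  rcases Finset.eq_empty_or_nonempty E with hE | ⟨y0, hy0⟩
  · -- no empty class : S covers everything
    have hScard : S.card = minDeg G := by
      have : E.card = 0 := by rw [hE]; rfl
      omega
    have hSU : S.image g = U :=
      Finset.eq_of_subset_of_card_le himgsub (by rw [hUcard, himgcard, hScard])
    have hcover : ∀ u ∈ U, ∃ y ∈ S, g y = u := by
      intro u hu
      rw [← hSU] at hu
      exact Finset.mem_image.mp hu
    have hPuniq : ∀ y ∈ S, ∀ w, Pm w y → w = g y := by
      intro y hy w hw
      obtain ⟨y'', hy'', heq⟩ := hcover w hw.1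
      by_cases hcase : y'' = y
      · rw [← heq, hcase]
      · exfalso
        have hy''P := ((hSmem y'').mp hy'').2
        have hadj := (hgP y'' hy''P).2.2 y (hSI' hy) (fun hh => hcase hh.symm)
        rw [heq] at hadj
        exact hw.2.1 hadj
    intro u hu u' hu' hne'
    obtain ⟨y, hy, rfl⟩ := hcover u hu
    obtain ⟨y', hy', rfl⟩ := hcover u' hu'
    exact hpair hPuniq y hy y' hy' (fun hh => hne' (by rw [hh]))
  · -- one empty class y0
    obtain ⟨hy0I', hy0P⟩ := (hEmem y0).mp hy0
    have hSeq : S = I'.erase y0 := by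
      ext y
      constructor
      · intro hyS
        obtain ⟨h1, h2⟩ := (hSmem y).mp hyS
        refine Finset.mem_erase.mpr ⟨?_, h1⟩
        intro hh; rw [hh] at h2; exact hy0P h2
      · intro hyE
        obtain ⟨h1, h2⟩ := Finset.mem_erase.mp hyE
        refine (hSmem y).mpr ⟨h2, ?_⟩
        by_contra h3
        exact h1 (hEone y ((hEmem y).mpr ⟨h2, h3⟩) y0 hy0)
    have hScard : S.card = minDeg G - 1 := by
      rw [hSeq, Finset.card_erase_of_mem hy0I', hI'card]
    obtain ⟨z, hzU, hznadj0⟩ := T2 y0 hy0I'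
    have hzI1 : ∃ y1 ∈ I', y1 ≠ y0 ∧ ¬ G.Adj z y1 := by
      by_contra hcon
      push_neg at hcon
      exact hy0P ⟨z, hzU, hznadj0, fun z' hz' hne' => hcon z' hz' hne'⟩
    obtain ⟨y1, hy1I', hy1ne, hznadj1⟩ := hzI1
    have hznotP : ∀ y ∈ I', ¬ Pm z y := by
      intro y hy hzP
      by_cases h0 : y = y0
      · exact hznadj1 (hzP.2.2 y1 hy1I' (h0 ▸ hy1ne))
      · exact hznadj0 (hzP.2.2 y0 hy0I' (fun hh => h0 hh.symm))
    have hznimg : z ∉ S.image g := by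
      intro hz
      obtain ⟨y, hy, heq⟩ := Finset.mem_image.mp hz
      have := hgP y ((hSmem y).mp hy).2
      rw [heq] at this
      exact hznotP y (hSI' hy) this
    have hins : insert z (S.image g) ⊆ U := by
      intro u hu
      rcases Finset.mem_insert.mp hu with rfl | hu'
      · exact hzU
      · exact himgsub hu'
    have hinscard : (insert z (S.image g)).card = minDeg G := by
      rw [Finset.card_insert_of_notMem hznimg, himgcard, hScard]
      omega
    have hUeq : insert z (S.image g) = U :=
      Finset.eq_of_subset_of_card_le hins (by rw [hUcard, hinscard])
    have hPuniq : ∀ y ∈ S, ∀ w, Pm w y → w = g y := by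
      intro y hy w hw
      have hwU : w ∈ U := hw.1
      rw [← hUeq] at hwU
      rcases Finset.mem_insert.mp hwU with rfl | hwimg
      · exact absurd hw (hznotP y (hSI' hy))
      · obtain ⟨y'', hy'', heq⟩ := Finset.mem_image.mp hwimg
        by_cases hcase : y'' = y
        · rw [← heq, hcase]
        · exfalso
          have hy''P := ((hSmem y'').mp hy'').2
          have hadj := (hgP y'' hy''P).2.2 y (hSI' hy) (fun hh => hcase hh.symm)
          rw [heq] at hadj
          exact hw.2.1 hadj
    have hzg : ∀ y ∈ S, G.Adj z (g y) := by
      intro y hy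
      have hyI' := hSI' hy
      have hyne0 : y ≠ y0 := by
        intro hh
        exact hy0P (hh ▸ ((hSmem y).mp hy).2)
      obtain ⟨a, b, w, hor, hwP, hdom⟩ := T1 y hyI' y0 hy0I' hyne0
      rcases hor with ⟨ha, hb⟩ | ⟨ha, hb⟩
      · rw [hb] at hwP
        exact absurd ⟨w, hwP⟩ hy0P
      · rw [hb] at hwP
        rw [ha] at hdom
        rw [hb] at hdom
        have hwg : w = g y := hPuniq y hy w hwP
        have h1 : z ≠ y0 := fun hh => hUI' z hzU (by rw [hh]; exact hy0I')
        have h2 : z ≠ w := by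
          rw [hwg]
          intro hh
          exact hznimg (Finset.mem_image.mpr ⟨y, hy, hh.symm⟩)
        have h3 : z ≠ y := fun hh => hUI' z hzU (by rw [hh]; exact hyI')
        rcases hdom z h1 h2 h3 with hh | hh
        · exact absurd hh hznadj0
        · rw [hwg] at hh; exact hh
    intro u hu u' hu' hne'
    rw [← hUeq] at hu hu'
    rcases Finset.mem_insert.mp hu with rfl | huimg
    · rcases Finset.mem_insert.mp hu' with rfl | hu'img
      · exact absurd rfl hne'
      · obtain ⟨y, hy, rfl⟩ := Finset.mem_image.mp hu'img
        exact hzg y hy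
    · rcases Finset.mem_insert.mp hu' with rfl | hu'img
      · obtain ⟨y, hy, rfl⟩ := Finset.mem_image.mp huimg
        exact (hzg y hy).symm
      · obtain ⟨y, hy, rfl⟩ := Finset.mem_image.mp huimg
        obtain ⟨y', hy', rfl⟩ := Finset.mem_image.mp hu'img
        exact hpair hPuniq y hy y' hy' (fun hh => hne' (by rw [hh]))
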